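/- Let b_r, b_{r+1}, b_{r+2}, b_{r+3} be distinct nonzero complex numbers. If L_r is Δ_r-normal of type (T1) (parameters x_r, y_r ∈ ℂ∖{0}) and L_{r+1} is Δ_{r+1}-normal of type (T2) (parameters x_{r+1}, y_{r+1}, q_{r+1} ∈ ℂ∖{0}, q'_{r+1} ∈ ℂ), then P_{1,1}(L_r) ≠ P_{3,3}(L_{r+1}). -/

import Mathlib

/-- `b_Δ(1) = 1/b₃ - 1/b₂`. -/
noncomputable def bD1 (b₁ b₂ b₃ : ℂ) : ℂ := 1 / b₃ - 1 / b₂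
/-- `b_Δ(2) = 1/b₃ - 1/b₁`. -/
noncomputable def bD2 (b₁ b₂ b₃ : ℂ) : ℂ := 1 / b₃ - 1 / b₁
/-- `b_Δ(3) = 1/b₂ - 1/b₁`. -/
noncomputable def bD3 (b₁ b₂ b₃ : ℂ) : ℂ := 1 / b₂ - 1 / b₁

/-- The five canonical generators of a type (T1) `Δ`-normal subspace,
`Δ = diag(b₁,b₂,b₃)`, with parameters `x, y`. -/
noncomputable def t1Basis (b₁ b₂ b₃ x y : ℂ) : Fin 5 → Matrix (Fin 3) (Fin 3) ℂ :=
  ![!![1, 0, 0; x, 0, 0; y, 0, 0],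
    !![1, 1, 0; bD3 b₁ b₂ b₃ * x, x, 0; bD2 b₁ b₂ b₃ * y, y, 0],
    !![0, 0, 1; 0, 0, 0; 0, 0, 0],
    !![0, 0, 0; bD3 b₁ b₂ b₃ / b₂, bD3 b₁ b₂ b₃, 1; 0, 0, 0],
    !![0, 0, 0; 0, 0, 0; bD2 b₁ b₂ b₃ / b₃, bD2 b₁ b₂ b₃, 1]]

/-- The type (T1) `Δ`-normal subspace with parameters `x, y`. -/
noncomputable def t1Normal (b₁ b₂ b₃ x y : ℂ) : Submodule ℂ (Matrix (Fin 3) (Fin 3) ℂ) :=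
  Submodule.span ℂ (Set.range (t1Basis b₁ b₂ b₃ x y))

/-- The five canonical generators of a type (T2) `Δ`-normal subspace,
`Δ = diag(b₁,b₂,b₃)`, with parameters `x, y, q, q'`. -/
noncomputable def t2Basis (b₁ b₂ b₃ x y q q' : ℂ) : Fin 5 → Matrix (Fin 3) (Fin 3) ℂ :=
  ![!![1, 0, 0; x, 0, 0; y, 0, 0],
    !![1, 1, 0; bD3 b₁ b₂ b₃ * x, x, 0; bD2 b₁ b₂ b₃ * y, y, 0],
    !![0, 0, 1; q', q, 0; q' * y / x + bD1 b₁ b₂ b₃ * q * y / x, q * y / x, 0],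
    !![0, 0, 0; bD3 b₁ b₂ b₃ / b₂ - q' / x, bD3 b₁ b₂ b₃ - q / x, 1; 0, 0, 0],
    !![0, 0, 0; 0, 0, 0;
       bD2 b₁ b₂ b₃ / b₃ - bD1 b₁ b₂ b₃ * q / x - q' / x, bD2 b₁ b₂ b₃ - q / x, 1]]

/-- The type (T2) `Δ`-normal subspace with parameters `x, y, q, q'`. -/
noncomputable def t2Normal (b₁ b₂ b₃ x y q q' : ℂ) :
    Submodule ℂ (Matrix (Fin 3) (Fin 3) ℂ) :=
  Submodule.span ℂ (Set.range (t2Basis b₁ b₂ b₃ x y q q'))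

/-- The five canonical generators of a strongly `Δ`-normal subspace,
`Δ = diag(b₁,b₂,b₃)`, with parameters `x, y, q`. -/
noncomputable def strongBasis (b₁ b₂ b₃ x y q : ℂ) : Fin 5 → Matrix (Fin 3) (Fin 3) ℂ :=
  ![!![1, 0, 0; x, 0, 0; y, 0, 0],
    !![0, 1, 0; bD3 b₁ b₂ b₃ * x, x, 0; bD2 b₁ b₂ b₃ * y, y, 0],
    !![0, 0, 1; q / b₂, q, 0; -y / (b₁ * b₃), -y / b₁, 0],
    !![0, 0, 0; 1 / b₂ ^ 2, 1 / b₂, 1; 0, 0, 0],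
    !![0, 0, 0; 0, 0, 0; 1 / b₃ ^ 2, 1 / b₃, 1]]

/-- The strongly `Δ`-normal subspace with parameters `x, y, q`. -/
noncomputable def strongNormal (b₁ b₂ b₃ x y q : ℂ) :
    Submodule ℂ (Matrix (Fin 3) (Fin 3) ℂ) :=
  Submodule.span ℂ (Set.range (strongBasis b₁ b₂ b₃ x y q))

/-- Deleting row `k` and column `l`, as a linear map `M₃(ℂ) → M₂(ℂ)`. -/
def delL (k l : Fin 3) : Matrix (Fin 3) (Fin 3) ℂ →ₗ[ℂ] Matrix (Fin 2) (Fin 2) ℂ where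
  toFun X := X.submatrix k.succAbove l.succAbove
  map_add' _ _ := rfl
  map_smul' _ _ := rfl

/-- The 3×3 lower Jordan cell. -/
def J3 : Matrix (Fin 3) (Fin 3) ℂ := !![0, 0, 0; 1, 0, 0; 0, 1, 0]

set_option maxHeartbeats 1600000 in
/-- A type (T1) cross-section cannot be followed by a type (T2) one:
`P_{1,1}(L_r) ≠ P_{3,3}(L_{r+1})`. -/
theorem t1_t2_no_match (b : ℕ → ℂ) (r : ℕ)
    (hb : ∀ k, k ∈ Finset.Icc r (r + 3) → b k ≠ 0)
    (hbd : ∀ k l, k ∈ Finset.Icc r (r + 3) → l ∈ Finset.Icc r (r + 3) → k ≠ l → b k ≠ b l)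
    (xr yr xr' yr' qr' : ℂ) (qr'' : ℂ)
    (hxr : xr ≠ 0) (hyr : yr ≠ 0) (hxr' : xr' ≠ 0) (hyr' : yr' ≠ 0) (hqr' : qr' ≠ 0) :
    Submodule.map (delL 0 0) (t1Normal (b r) (b (r + 1)) (b (r + 2)) xr yr)
      ≠ Submodule.map (delL 2 2)
          (t2Normal (b (r + 1)) (b (r + 2)) (b (r + 3)) xr' yr' qr' qr'') := by
  intro h
  have hmem : ∀ i : Fin 5,
      delL 2 2 (t2Basis (b (r + 1)) (b (r + 2)) (b (r + 3)) xr' yr' qr' qr'' i)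
        ∈ Submodule.map (delL 0 0) (t1Normal (b r) (b (r + 1)) (b (r + 2)) xr yr) := by
    intro i
    rw [h]
    exact Submodule.mem_map_of_mem (Submodule.subset_span ⟨i, rfl⟩)
  obtain ⟨m, hm, hme⟩ := hmem 0
  obtain ⟨n, hn, hne⟩ := hmem 1
  rw [t1Normal, SetLike.mem_coe, Submodule.mem_span_range_iff_exists_fun] at hm hn
  obtain ⟨c, hc⟩ := hm
  obtain ⟨d, hd⟩ := hn
  rw [← hc] at hme
  rw [← hd] at hne
  have e00 := congrFun (congrFun hme 0) 0
  have e01 := congrFun (congrFun hme 0) 1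
  have e10 := congrFun (congrFun hme 1) 0
  have e11 := congrFun (congrFun hme 1) 1
  have f00 := congrFun (congrFun hne 0) 0
  have f01 := congrFun (congrFun hne 0) 1
  have f10 := congrFun (congrFun hne 1) 0
  have f11 := congrFun (congrFun hne 1) 1
  have hdel : ∀ k l (X : Matrix (Fin 3) (Fin 3) ℂ), delL k l X = X.submatrix k.succAbove l.succAbove :=
    fun _ _ _ => rfl
  simp only [hdel] at e00 e01 e10 e11 f00 f01 f10 f11
  simp [delL, t1Basis, t2Basis, Fin.sum_univ_five, Matrix.sum_apply,
    Fin.succAbove, Fin.lt_def] at e00 e01 e10 e11 f00 f01 f10 f11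
  -- e01 : c 3 = 0, e11 : c 4 = 0, e00 : c 1 * xr + c 3 * bD3 = 1, e10 : c 1 * yr + c 4 * bD2 = xr'
  -- f01 : d 3 = 1, f11 : d 4 = xr', f00 : ..., f10 : ...
  set A := bD3 (b r) (b (r + 1)) (b (r + 2)) with hA'
  set B := bD3 (b (r + 1)) (b (r + 2)) (b (r + 3)) with hB'
  set C := bD2 (b r) (b (r + 1)) (b (r + 2)) with hC'
  have hABC : A + B - C = 0 := by
    rw [hA', hB', hC']; simp only [bD3, bD2]; ring
  rw [e01, zero_mul, add_zero] at e00
  rw [e11, zero_mul, add_zero] at e10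
  rw [f01, one_mul] at f00
  rw [f11] at f10
  have hx : xr' * xr = yr := by rw [← e10]; linear_combination yr * e00
  have h2 : d 1 * xr * yr = (1 - A) * yr := by linear_combination yr * f00
  have h3 : d 1 * yr * xr = (B - C) * yr := by
    linear_combination xr * f10 + (B - C) * hx
  exact hyr (by linear_combination h3 - h2 + yr * hABC)
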